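/- For the quantum circuit analysis of the modified SIMON linear approximation: in Case (q₁,q₃)=(0,0) the probability that r₀ = 0 equals cos²(θ/2); the same holds for Case (0,1); in Cases (1,0) and (1,1) the probability equals (1+sin θ)/2. At θ = π/4 all four probabilities equal (2+√2)/4. -/

import Mathlib

open Matrix Kronecker Real

noncomputable def rotGate (θ : ℝ) : Matrix (Fin 2) (Fin 2) ℝ :=
  !![Real.cos (θ/2), -Real.sin (θ/2); Real.sin (θ/2), Real.cos (θ/2)]

noncomputable def hadamard : Matrix (Fin 2) (Fin 2) ℝ :=
  (Real.sqrt 2)⁻¹ • !![1, 1; 1, -1]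

def xGate : Matrix (Fin 2) (Fin 2) ℝ := !![0, 1; 1, 0]

/-- The Bell state `(|00⟩ + |11⟩)/√2` on the registers `(r₀, k₀)`. -/
noncomputable def bellState : Fin 2 × Fin 2 → ℝ :=
  fun p => if p.1 = p.2 then (Real.sqrt 2)⁻¹ else 0

/-- CNOT with control `k₀` (second register) and target `r₀` (first register). -/
def cnot21 (φ : Fin 2 × Fin 2 → ℝ) : Fin 2 × Fin 2 → ℝ :=
  fun p => φ (p.1 + p.2, p.2)

/-- The final state of the modified SIMON circuit with classical control bits `q₁, q₃`:
apply `H` to `r₀` if `q₁ = 1`; apply `R(−θ)` to `k₀` if `q₃ = 0` and `R(θ)` if `q₃ = 1`;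
apply `X` to `r₀` if `q₁ = q₃ = 1`; finally apply CNOT (control `k₀`, target `r₀`). -/
noncomputable def finalState (q₁ q₃ : Bool) (θ : ℝ) : Fin 2 × Fin 2 → ℝ :=
  cnot21
    ((((if q₁ && q₃ then xGate else 1) ⊗ₖ (1 : Matrix (Fin 2) (Fin 2) ℝ)).mulVec
      (((if q₁ then hadamard else 1) ⊗ₖ rotGate (if q₃ then θ else -θ)).mulVec bellState)))

/-- Probability of measuring `r₀ = 0`. -/
noncomputable def probFirstZero (φ : Fin 2 × Fin 2 → ℝ) : ℝ :=
  (φ (0, 0)) ^ 2 + (φ (0, 1)) ^ 2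

lemma caseA (θ : ℝ) (b : Bool) :
    probFirstZero (finalState false b θ) = Real.cos (θ/2) ^ 2 := by
  unfold probFirstZero finalState cnot21 bellState rotGate _root_.hadamard xGate
  have h2 : Real.sqrt 2 ^ 2 = 2 := Real.sq_sqrt (by norm_num)
  have hs : Real.sqrt 2 ≠ 0 := by positivity
  cases b <;>
  · simp [Matrix.mulVec, dotProduct, Fintype.sum_prod_type, Fin.sum_univ_two,
      Matrix.kroneckerMap_apply, Matrix.one_apply, neg_div, Real.cos_neg, Real.sin_neg]
    try field_simp
    try ring_nf
    simp only [show Real.sqrt 2 ^ 4 = 4 by rw [show Real.sqrt 2 ^ 4 = (Real.sqrt 2 ^ 2) ^ 2 by ring, h2]; norm_num, h2]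
    try linarith [Real.sin_sq_add_cos_sq (θ*(1/2))]

lemma caseB (θ : ℝ) (b : Bool) :
    probFirstZero (finalState true b θ) = (1 + Real.sin θ) / 2 := by
  unfold probFirstZero finalState cnot21 bellState rotGate _root_.hadamard xGate
  have h2 : Real.sqrt 2 ^ 2 = 2 := Real.sq_sqrt (by norm_num)
  have hs : Real.sqrt 2 ≠ 0 := by positivity
  have hsin := Real.sin_sq_add_cos_sq (θ/2)
  have hst : Real.sin θ = 2 * Real.sin (θ/2) * Real.cos (θ/2) := by
    rw [← Real.sin_two_mul]; ring_nf
  cases b <;>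
  · simp [Matrix.mulVec, dotProduct, Fintype.sum_prod_type, Fin.sum_univ_two,
      Matrix.kroneckerMap_apply, Matrix.one_apply, neg_div, Real.cos_neg, Real.sin_neg]
    rw [hst]
    try field_simp
    try ring_nf
    simp only [show Real.sqrt 2 ^ 4 = 4 by rw [show Real.sqrt 2 ^ 4 = (Real.sqrt 2 ^ 2) ^ 2 by ring, h2]; norm_num, h2]
    try linarith [Real.sin_sq_add_cos_sq (θ*(1/2))]

/-- The four case probabilities of the modified SIMON linear-approximation circuit:
`cos²(θ/2)` when `q₁ = 0` (both values of `q₃`), and `(1 + sin θ)/2` when `q₁ = 1`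
(both values of `q₃`); at `θ = π/4` all four equal `(2 + √2)/4`. -/
theorem modified_simon_case_probabilities (θ : ℝ) :
    probFirstZero (finalState false false θ) = Real.cos (θ/2) ^ 2 ∧
    probFirstZero (finalState false true θ) = Real.cos (θ/2) ^ 2 ∧
    probFirstZero (finalState true false θ) = (1 + Real.sin θ) / 2 ∧
    probFirstZero (finalState true true θ) = (1 + Real.sin θ) / 2 ∧
    (Real.cos (Real.pi/4/2) ^ 2 = (2 + Real.sqrt 2) / 4 ∧
      (1 + Real.sin (Real.pi/4)) / 2 = (2 + Real.sqrt 2) / 4) := by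
  refine ⟨caseA θ false, caseA θ true, caseB θ false, caseB θ true, ?_, ?_⟩
  · rw [show Real.pi/4/2 = Real.pi/8 by ring, Real.cos_pi_div_eight]
    rw [div_pow, Real.sq_sqrt (by positivity)]
    norm_num
  · rw [Real.sin_pi_div_four]
    ring
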